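/- Let m, I_z, C_f, C_r, L_f, L_r, δ, V_x, V_y, r, a, b be real numbers with V_x ≠ 0, m ≠ 0 and L_f ≠ 0, where r denotes the yaw rate ψ', a denotes V_y' and b denotes ψ''. Define F_yf = C_f (δ - (V_y + r L_f)/V_x), F_yr = -C_r (V_y - r L_r)/V_x, and assume m(a + r V_x) = F_yf + F_yr and I_z b = L_f F_yf - L_r F_yr. Set z₁ = V_x, z₂ = L_f m V_y - I_z r, ż₂ = L_f m a - I_z b, and D = C_r (L_f + L_r)(I_z - L_r L_f m) + (L_f m z₁)². If D ≠ 0, then the lateral speed is recovered from the flat outputs by V_y = z₂/(L_f m) - (I_z/(L_f m)) · ( L_f m z₁ ż₂ + C_r (L_f + L_r) z₂ ) / D. -/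

import Mathlib

/-- Flatness of the two-wheel vehicle model: the lateral speed V_y is recovered
from the flat outputs z₁ = V_x, z₂ = L_f m V_y - I_z ψ' and ż₂. -/
theorem lateral_speed_from_flat_outputs
    (m I_z C_f C_r L_f L_r δ V_x V_y r a b : ℝ)
    (hVx : V_x ≠ 0) (hm : m ≠ 0) (hLf : L_f ≠ 0)
    (F_yf F_yr : ℝ)
    (hFyf : F_yf = C_f * (δ - (V_y + r * L_f) / V_x))
    (hFyr : F_yr = -C_r * (V_y - r * L_r) / V_x)
    (hlat : m * (a + r * V_x) = F_yf + F_yr)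
    (hyaw : I_z * b = L_f * F_yf - L_r * F_yr)
    (z₁ z₂ dz₂ D : ℝ)
    (hz₁ : z₁ = V_x) (hz₂ : z₂ = L_f * m * V_y - I_z * r)
    (hdz₂ : dz₂ = L_f * m * a - I_z * b)
    (hD : D = C_r * (L_f + L_r) * (I_z - L_r * L_f * m) + (L_f * m * z₁) ^ 2)
    (hDne : D ≠ 0) :
    V_y = z₂ / (L_f * m)
      - (I_z / (L_f * m)) *
        ((L_f * m * z₁ * dz₂ + C_r * (L_f + L_r) * z₂) / D) := by
  have key : dz₂ * V_x = -(C_r * (L_f + L_r)) * (V_y - r * L_r) - L_f * m * r * V_x ^ 2 := by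
    field_simp at hFyr
    linear_combination hdz₂ * V_x + L_f * V_x * hlat - V_x * hyaw + (L_f + L_r) * hFyr
  rw [hz₁] at hD ⊢
  field_simp
  linear_combination (-(D) + I_z * (C_r * (L_f + L_r))) * hz₂
    + (L_f * m) * I_z * key + I_z * r * hD
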